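/- Let H be a Hopf algebra over a field k. The elements p_x = t_{x_1} t_{S(x_2)} and q_{x,y} = t_{x_1} t_{y_1} t_{S(x_2 y_2)} of S(t_H), for all x, y ∈ H, belong to the image μ̄(V_H) of the coinvariant subalgebra V_H of the universal H-comodule algebra U_H; explicitly, the elements P_x = X_{x_1} X_{S(x_2)} and Q_{x,y} = X_{x_1} X_{y_1} X_{S(x_2 y_2)} of T(X_H) are right H-coinvariant and satisfy μ(P_x) = p_x ⊗ 1 and μ(Q_{x,y}) = q_{x,y} ⊗ 1. -/

import Mathlib

open TensorProduct

noncomputable section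

/-- A submodule `S` of a coalgebra `C` is a subcoalgebra if `Δ(S) ⊆ S ⊗ S`. -/
def IsSubcoalg (k : Type*) [Field k] {C : Type*} [AddCommGroup C] [Module k C] [Coalgebra k C]
    (S : Submodule k C) : Prop :=
  ∀ x ∈ S, Coalgebra.comul (R := k) x ∈
    LinearMap.range (TensorProduct.map S.subtype S.subtype)

/-- A coalgebra is pointed if every simple subcoalgebra is one-dimensional. -/
def IsPointedCoalg (k C : Type*) [Field k] [AddCommGroup C] [Module k C] [Coalgebra k C] : Prop :=
  ∀ S : Submodule k C, IsSubcoalg k S → S ≠ ⊥ →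
    (∀ T : Submodule k C, IsSubcoalg k T → T < S → T = ⊥) →
    Module.finrank k S = 1

/-- A group-like element: `ε(g) = 1` and `Δ(g) = g ⊗ g`. -/
def IsGpLike (k : Type*) [Field k] {C : Type*} [AddCommGroup C] [Module k C] [Coalgebra k C]
    (g : C) : Prop :=
  Coalgebra.counit (R := k) g = 1 ∧ Coalgebra.comul (R := k) g = g ⊗ₜ[k] g

/-- Data exhibiting `A` as the free commutative Hopf algebra `S(t_C)_Θ` on a coalgebra `C`. -/
structure FreeCommHopfData (k : Type*) [Field k] (C : Type*) [AddCommGroup C] [Module k C]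
    [Coalgebra k C] (A : Type*) [CommRing A] [HopfAlgebra k A] where
  t : C →ₗ[k] A
  tinv : C →ₗ[k] A
  comul_t : ∀ x : C, Coalgebra.comul (R := k) (t x) = TensorProduct.map t t (Coalgebra.comul x)
  comul_tinv : ∀ x : C, Coalgebra.comul (R := k) (tinv x)
      = TensorProduct.map tinv tinv (TensorProduct.comm k C C (Coalgebra.comul (R := k) x))
  counit_t : ∀ x : C, Coalgebra.counit (R := k) (t x) = Coalgebra.counit (R := k) x
  counit_tinv : ∀ x : C, Coalgebra.counit (R := k) (tinv x) = Coalgebra.counit (R := k) x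
  mul_t_tinv : ∀ x : C, LinearMap.mul' k A (TensorProduct.map t tinv (Coalgebra.comul (R := k) x))
      = Coalgebra.counit (R := k) x • (1 : A)
  mul_tinv_t : ∀ x : C, LinearMap.mul' k A (TensorProduct.map tinv t (Coalgebra.comul (R := k) x))
      = Coalgebra.counit (R := k) x • (1 : A)
  antipode_t : ∀ x : C, HopfAlgebra.antipode (R := k) (t x) = tinv x
  antipode_tinv : ∀ x : C, HopfAlgebra.antipode (R := k) (tinv x) = t x
  injective_t : Function.Injective t
  isDomain : IsDomain A
  adjoin_eq_top : Algebra.adjoin k (Set.range t ∪ Set.range tinv) = ⊤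
  universal : ∀ {A' : Type*} [CommRing A'] [HopfAlgebra k A'] (f : C →ₗ[k] A'),
      (∀ x : C, Coalgebra.comul (R := k) (f x) = TensorProduct.map f f (Coalgebra.comul (R := k) x)) →
      (∀ x : C, Coalgebra.counit (R := k) (f x) = Coalgebra.counit (R := k) x) →
      ∃! φ : A →ₐc[k] A', ∀ x : C, φ (t x) = f x

/-- Data exhibiting `Hab` as the largest commutative Hopf algebra quotient of `H`. -/
structure HabData (k : Type*) [Field k] (H : Type*) [Ring H] [HopfAlgebra k H]
    (Hab : Type*) [CommRing Hab] [HopfAlgebra k Hab] where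
  q : H →ₐc[k] Hab
  surjective_q : Function.Surjective q
  universal : ∀ {B : Type*} [CommRing B] [HopfAlgebra k B] (f : H →ₐc[k] B),
      ∃! g : Hab →ₐc[k] B, ∀ x : H, g (q x) = f x

variable {k : Type*} [Field k]

section Generic

variable {H : Type*} [Ring H] [HopfAlgebra k H] {A : Type*} [CommRing A] [HopfAlgebra k A]

/-- σ(x,y) = t_{x₁} t_{y₁} t⁻¹_{x₂ y₂}. -/
def sigmaElem (F : FreeCommHopfData k H A) (x y : H) : A :=
  (LinearMap.mul' k A).comp
    ((TensorProduct.map (LinearMap.mul' k A) LinearMap.id).comp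
      ((TensorProduct.map (TensorProduct.map F.t F.t) (F.tinv.comp (LinearMap.mul' k H))).comp
        (TensorProduct.tensorTensorTensorComm k H H H H).toLinearMap))
    ((Coalgebra.comul (R := k) x) ⊗ₜ[k] (Coalgebra.comul (R := k) y))

/-- σ⁻¹(x,y) = t_{x₁ y₁} t⁻¹_{x₂} t⁻¹_{y₂}. -/
def sigmaInvElem (F : FreeCommHopfData k H A) (x y : H) : A :=
  (LinearMap.mul' k A).comp
    ((TensorProduct.map LinearMap.id (LinearMap.mul' k A)).comp
      ((TensorProduct.map (F.t.comp (LinearMap.mul' k H)) (TensorProduct.map F.tinv F.tinv)).comp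
        (TensorProduct.tensorTensorTensorComm k H H H H).toLinearMap))
    ((Coalgebra.comul (R := k) x) ⊗ₜ[k] (Coalgebra.comul (R := k) y))

/-- The generic base algebra B_H. -/
def genericBase (F : FreeCommHopfData k H A) : Subalgebra k A :=
  Algebra.adjoin k ({a | ∃ x y : H, a = sigmaElem F x y} ∪ {a | ∃ x y : H, a = sigmaInvElem F x y})

/-- The coaction δ_S = (id ⊗ q̃) ∘ Δ of H_ab on S(t_H)_Θ, as an algebra map. -/
def coactS {Hab : Type*} [CommRing Hab] [HopfAlgebra k Hab] (qt : A →ₐc[k] Hab) :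
    A →ₐ[k] A ⊗[k] Hab :=
  (Algebra.TensorProduct.map (AlgHom.id k A) (qt : A →ₐ[k] Hab)).comp (Bialgebra.comulAlgHom k A)

/-- The subalgebra C_H of right H_ab-coinvariants of S(t_H)_Θ. -/
def coinvCH {Hab : Type*} [CommRing Hab] [HopfAlgebra k Hab] (qt : A →ₐc[k] Hab) :
    Subalgebra k A :=
  AlgHom.equalizer (coactS qt) Algebra.TensorProduct.includeLeft

end Generic

/-- `B` is a localization of `A` (inside an ambient commutative ring `R`): `A ⊆ B`, and `B` is
obtained from `A` by inverting a multiplicative subset of `A`. -/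
def IsLocalizationOfSet {R : Type*} [CommRing R] (A B : Set R) : Prop :=
  A ⊆ B ∧ ∃ M : Submonoid R, (M : Set R) ⊆ A ∧ (∀ m ∈ M, ∃ b ∈ B, m * b = 1) ∧
    ∀ b ∈ B, ∃ m ∈ M, b * m ∈ A


section PI

variable {H : Type*} [Ring H] [HopfAlgebra k H] {A : Type*} [CommRing A] [HopfAlgebra k A]

/-- The coaction δ_T of H on the tensor algebra T(X_H), with δ_T(X_x) = X_{x₁} ⊗ x₂. -/
def coactT (k : Type*) [Field k] (H : Type*) [Ring H] [HopfAlgebra k H] :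
    TensorAlgebra k H →ₐ[k] TensorAlgebra k H ⊗[k] H :=
  TensorAlgebra.lift k
    ((TensorProduct.map (TensorAlgebra.ι k) LinearMap.id).comp
      (Coalgebra.comul (R := k) (A := H)))

/-- The universal comodule algebra map μ : T(X_H) → S(t_H) ⊗ H, μ(X_x) = t_{x₁} ⊗ x₂. -/
def muMap (F : FreeCommHopfData k H A) : TensorAlgebra k H →ₐ[k] A ⊗[k] H :=
  TensorAlgebra.lift k
    ((TensorProduct.map F.t LinearMap.id).comp (Coalgebra.comul (R := k) (A := H)))

/-- p_x = t_{x₁} t_{S(x₂)}, as a linear function of x. -/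
def pMap (F : FreeCommHopfData k H A) : H →ₗ[k] A :=
  (LinearMap.mul' k A).comp
    ((TensorProduct.map F.t (F.t.comp (HopfAlgebra.antipode (R := k)))).comp
      (Coalgebra.comul (R := k)))

/-- q_{x,y} = t_{x₁} t_{y₁} t_{S(x₂ y₂)}, as a linear function of x ⊗ y. -/
def qMap (F : FreeCommHopfData k H A) : H ⊗[k] H →ₗ[k] A :=
  ((LinearMap.mul' k A).comp
    ((TensorProduct.map (LinearMap.mul' k A) LinearMap.id).comp
      ((TensorProduct.map (TensorProduct.map F.t F.t)
          ((F.t.comp ((HopfAlgebra.antipode (R := k)).comp (LinearMap.mul' k H))))).comp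
        (TensorProduct.tensorTensorTensorComm k H H H H).toLinearMap))).comp
    (TensorProduct.map (Coalgebra.comul (R := k)) (Coalgebra.comul (R := k)))

/-- P_x = X_{x₁} X_{S(x₂)} in the tensor algebra. -/
def PElem (k : Type*) [Field k] {H : Type*} [Ring H] [HopfAlgebra k H] (x : H) :
    TensorAlgebra k H :=
  (LinearMap.mul' k (TensorAlgebra k H))
    ((TensorProduct.map (TensorAlgebra.ι k)
      ((TensorAlgebra.ι k).comp (HopfAlgebra.antipode (R := k)))) (Coalgebra.comul (R := k) x))

/-- Q_{x,y} = X_{x₁} X_{y₁} X_{S(x₂ y₂)} in the tensor algebra. -/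
def QElem (k : Type*) [Field k] {H : Type*} [Ring H] [HopfAlgebra k H] (x y : H) :
    TensorAlgebra k H :=
  (LinearMap.mul' k (TensorAlgebra k H))
    ((TensorProduct.map (LinearMap.mul' k (TensorAlgebra k H)) LinearMap.id)
      ((TensorProduct.map (TensorProduct.map (TensorAlgebra.ι k) (TensorAlgebra.ι k))
          ((TensorAlgebra.ι k).comp ((HopfAlgebra.antipode (R := k)).comp (LinearMap.mul' k H))))
        ((TensorProduct.tensorTensorTensorComm k H H H H)
          ((Coalgebra.comul (R := k) x) ⊗ₜ[k] (Coalgebra.comul (R := k) y)))))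

/-- μ̄(V_H): the image in S(t_H) ⊆ A of the coinvariants of the universal comodule algebra. -/
def VHSet (F : FreeCommHopfData k H A) : Set A :=
  {a : A | ∃ u : TensorAlgebra k H, muMap F u = a ⊗ₜ[k] 1}

/-- `a` is a monomial of degree ≤ m (and ≥ 1) in the t-variables. -/
def IsTMonomialLe (F : FreeCommHopfData k H A) (m : ℕ) (a : A) : Prop :=
  ∃ d : ℕ, 1 ≤ d ∧ d ≤ m ∧ ∃ f : Fin d → H, a = ∏ j, F.t (f j)

/-- `a` is a monomial of degree ≤ m in the variables t_g, g group-like. -/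
def IsTGpMonomialLe (F : FreeCommHopfData k H A) (m : ℕ) (a : A) : Prop :=
  ∃ d : ℕ, 1 ≤ d ∧ d ≤ m ∧ ∃ f : Fin d → H, (∀ j, IsGpLike k (f j)) ∧ a = ∏ j, F.t (f j)

end PI

/-- Data exhibiting `H` as the Hopf algebra O_k(G) of k-valued functions on a finite group `G`. -/
structure FunAlgData (k : Type*) [Field k] (G : Type*) [Group G] [Fintype G] [DecidableEq G]
    (H : Type*) [CommRing H] [HopfAlgebra k H] where
  e : Module.Basis G k H
  mul_e : ∀ g h : G, e g * e h = if g = h then e g else 0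
  sum_e : ∑ g : G, e g = 1
  comul_e : ∀ g : G, Coalgebra.comul (R := k) (e g) = ∑ h : G, e (g * h⁻¹) ⊗ₜ[k] e h
  counit_e : ∀ g : G, Coalgebra.counit (R := k) (e g) = if g = 1 then (1 : k) else 0
  antipode_e : ∀ g : G, HopfAlgebra.antipode (R := k) (e g) = e g⁻¹


noncomputable section HopfAux



noncomputable section HopfPrep

open Coalgebra HopfAlgebra TensorProduct

variable {K : Type*} [Field K] {B : Type*} [Ring B] [HopfAlgebra K B]
variable {L : Type*} [Ring L] [Algebra K L]

/-- Convolution product on linear maps from a Hopf algebra to an algebra. -/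
noncomputable def hconv (p q : B →ₗ[K] L) : B →ₗ[K] L :=
  LinearMap.mul' K L ∘ₗ TensorProduct.map p q ∘ₗ Coalgebra.comul (R := K)

/-- Convolution unit. -/
noncomputable def hunit : B →ₗ[K] L :=
  Algebra.linearMap K L ∘ₗ Coalgebra.counit (R := K)

lemma hconv_repr (p q : B →ₗ[K] L) (x : B) (r : Coalgebra.Repr K x (B × B)) :
    hconv p q x = ∑ i ∈ r.index, p (r.left i) * q (r.right i) := by
  simp only [hconv, LinearMap.comp_apply, ← r.eq, map_sum, TensorProduct.map_tmul,
    LinearMap.mul'_apply]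

lemma hunit_apply (x : B) : (hunit : B →ₗ[K] L) x = algebraMap K L (Coalgebra.counit (R := K) x) :=
  rfl

lemma sum_counit_smul (x : B) (r : Coalgebra.Repr K x (B × B)) :
    ∑ i ∈ r.index, Coalgebra.counit (R := K) (r.left i) • r.right i = x := by
  have h := Coalgebra.sum_counit_tmul_eq (R := K) r
  calc ∑ i ∈ r.index, Coalgebra.counit (R := K) (r.left i) • r.right i
      = TensorProduct.lid K B (∑ i ∈ r.index,
          Coalgebra.counit (R := K) (r.left i) ⊗ₜ[K] r.right i) := by rw [map_sum]; simp
    _ = TensorProduct.lid K B ((1 : K) ⊗ₜ[K] x) := by rw [h]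
    _ = x := by simp

lemma sum_smul_counit (x : B) (r : Coalgebra.Repr K x (B × B)) :
    ∑ i ∈ r.index, Coalgebra.counit (R := K) (r.right i) • r.left i = x := by
  have h := Coalgebra.sum_tmul_counit_eq (R := K) r
  calc ∑ i ∈ r.index, Coalgebra.counit (R := K) (r.right i) • r.left i
      = TensorProduct.rid K B (∑ i ∈ r.index,
          r.left i ⊗ₜ[K] Coalgebra.counit (R := K) (r.right i)) := by rw [map_sum]; simp
    _ = TensorProduct.rid K B (x ⊗ₜ[K] (1 : K)) := by rw [h]
    _ = x := by simp

lemma hconv_hunit (p : B →ₗ[K] L) : hconv p hunit = p := by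
  ext x
  have r : Coalgebra.Repr K x (B × B) := ℛ K x
  rw [hconv_repr p hunit x r]
  calc ∑ i ∈ r.index, p (r.left i) * hunit (r.right i)
      = ∑ i ∈ r.index, Coalgebra.counit (R := K) (r.right i) • p (r.left i) := by
        refine Finset.sum_congr rfl fun i _ => ?_
        rw [hunit_apply, ← Algebra.commutes, ← Algebra.smul_def]
    _ = p (∑ i ∈ r.index, Coalgebra.counit (R := K) (r.right i) • r.left i) := by
        rw [map_sum]; simp
    _ = p x := by rw [sum_smul_counit x r]

lemma hunit_hconv (p : B →ₗ[K] L) : hconv hunit p = p := by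
  ext x
  have r : Coalgebra.Repr K x (B × B) := ℛ K x
  rw [hconv_repr hunit p x r]
  calc ∑ i ∈ r.index, hunit (r.left i) * p (r.right i)
      = ∑ i ∈ r.index, Coalgebra.counit (R := K) (r.left i) • p (r.right i) := by
        refine Finset.sum_congr rfl fun i _ => ?_
        rw [hunit_apply, ← Algebra.smul_def]
    _ = p (∑ i ∈ r.index, Coalgebra.counit (R := K) (r.left i) • r.right i) := by
        rw [map_sum]; simp
    _ = p x := by rw [sum_counit_smul x r]

lemma hconv_assoc (p q s : B →ₗ[K] L) : hconv (hconv p q) s = hconv p (hconv q s) := by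
  ext x
  set r := ℛ K x with hrdef
  set a : ∀ i, Coalgebra.Repr K (r.left i) (B × B) := fun i => ℛ K (r.left i) with hadef
  set b : ∀ i, Coalgebra.Repr K (r.right i) (B × B) := fun i => ℛ K (r.right i) with hbdef
  have key := Coalgebra.sum_tmul_tmul_eq (R := K) r a b
  apply_fun (LinearMap.mul' K L ∘ₗ
    TensorProduct.map p (LinearMap.mul' K L ∘ₗ TensorProduct.map q s)) at key
  simp only [map_sum, LinearMap.comp_apply, TensorProduct.map_tmul,
    LinearMap.mul'_apply] at key
  rw [hconv_repr _ s x r, hconv_repr p _ x r]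
  calc ∑ i ∈ r.index, hconv p q (r.left i) * s (r.right i)
      = ∑ i ∈ r.index, ∑ j ∈ (a i).index,
          p ((a i).left j) * (q ((a i).right j) * s (r.right i)) := by
        refine Finset.sum_congr rfl fun i _ => ?_
        rw [hconv_repr p q _ (a i), Finset.sum_mul]
        exact Finset.sum_congr rfl fun j _ => (mul_assoc _ _ _)
    _ = ∑ i ∈ r.index, ∑ l ∈ (b i).index,
          p (r.left i) * (q ((b i).left l) * s ((b i).right l)) := key
    _ = ∑ i ∈ r.index, p (r.left i) * hconv q s (r.right i) := by
        refine Finset.sum_congr rfl fun i _ => ?_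
        rw [hconv_repr q s _ (b i), Finset.mul_sum]

end HopfPrep

section Part2

open Coalgebra HopfAlgebra TensorProduct

variable {K : Type*} [Field K] {B : Type*} [Ring B] [HopfAlgebra K B]

/-- `(S ⊗ S) ∘ τ ∘ Δ`. -/
noncomputable def gSwap : B →ₗ[K] B ⊗[K] B :=
  TensorProduct.map (HopfAlgebra.antipode (R := K)) (HopfAlgebra.antipode (R := K)) ∘ₗ
    (TensorProduct.comm K B B).toLinearMap ∘ₗ Coalgebra.comul (R := K)

lemma hconv_comul_comulS :
    hconv (Coalgebra.comul (R := K) (A := B))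
      (Coalgebra.comul (R := K) ∘ₗ HopfAlgebra.antipode (R := K)) = hunit := by
  ext x
  have r : Coalgebra.Repr K x (B × B) := ℛ K x
  rw [hconv_repr _ _ x r, hunit_apply]
  calc ∑ i ∈ r.index, (Coalgebra.comul (R := K) (r.left i) : B ⊗[K] B) *
        (Coalgebra.comul (R := K) ∘ₗ HopfAlgebra.antipode (R := K)) (r.right i)
      = Coalgebra.comul (R := K)
          (∑ i ∈ r.index, r.left i * HopfAlgebra.antipode (R := K) (r.right i)) := by
        rw [map_sum]
        exact Finset.sum_congr rfl fun i _ => (Bialgebra.comul_mul _ _).symm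
    _ = Coalgebra.comul (R := K)
          ((Coalgebra.counit (R := K) x • 1 : B)) := by
        rw [HopfAlgebra.sum_mul_antipode_eq_smul r]
    _ = algebraMap K (B ⊗[K] B) (Coalgebra.counit (R := K) x) := by
        rw [map_smul, Bialgebra.comul_one, Algebra.algebraMap_eq_smul_one]

lemma hconv_gSwap_comul :
    hconv (gSwap (K := K) (B := B)) (Coalgebra.comul (R := K)) = hunit := by
  ext x
  have r : Coalgebra.Repr K x (B × B) := ℛ K x
  have a : ∀ i, Coalgebra.Repr K (r.left i) (B × B) := fun i => ℛ K (r.left i)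
  have b : ∀ i, Coalgebra.Repr K (r.right i) (B × B) := fun i => ℛ K (r.right i)
  have d : ∀ i l, Coalgebra.Repr K ((b i).left l) (B × B) := fun i l => ℛ K ((b i).left l)
  have e : ∀ i l, Coalgebra.Repr K ((b i).right l) (B × B) := fun i l => ℛ K ((b i).right l)
  rw [hconv_repr _ _ x r, hunit_apply]
  -- Θ_B : B ⊗ (B ⊗ B) →ₗ B ⊗ B,  p ⊗ (q ⊗ s) ↦ (S q ⊗ S p) * Δ s
  set ΘB : B ⊗[K] (B ⊗[K] B) →ₗ[K] B ⊗[K] B :=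
    LinearMap.mul' K (B ⊗[K] B) ∘ₗ
      TensorProduct.map
        (TensorProduct.map (HopfAlgebra.antipode (R := K)) (HopfAlgebra.antipode (R := K)) ∘ₗ
          (TensorProduct.comm K B B).toLinearMap)
        (Coalgebra.comul (R := K)) ∘ₗ
      (TensorProduct.assoc K B B B).symm.toLinearMap with hΘB
  have key1 := Coalgebra.sum_tmul_tmul_eq (R := K) r a b
  apply_fun ΘB at key1
  simp only [hΘB, map_sum, LinearMap.comp_apply, LinearEquiv.coe_coe,
    TensorProduct.assoc_symm_tmul, TensorProduct.map_tmul, TensorProduct.comm_tmul,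
    LinearMap.mul'_apply] at key1
  -- key1 : ∑ i ∑ j (S a₂ ⊗ S a₁) * Δ rᵢ = ∑ i ∑ l (S b₁ ⊗ S lᵢ) * Δ b₂
  calc ∑ i ∈ r.index, gSwap (r.left i) * Coalgebra.comul (R := K) (r.right i)
      = ∑ i ∈ r.index, ∑ j ∈ (a i).index,
          ((HopfAlgebra.antipode (R := K) ((a i).right j) ⊗ₜ[K]
            HopfAlgebra.antipode (R := K) ((a i).left j)) *
            Coalgebra.comul (R := K) (r.right i)) := by
        refine Finset.sum_congr rfl fun i _ => ?_
        rw [show gSwap (r.left i) = ∑ j ∈ (a i).index,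
            HopfAlgebra.antipode (R := K) ((a i).right j) ⊗ₜ[K]
              HopfAlgebra.antipode (R := K) ((a i).left j) by
          simp only [gSwap, LinearMap.comp_apply, ← (a i).eq, map_sum, LinearEquiv.coe_coe,
            TensorProduct.comm_tmul, TensorProduct.map_tmul], Finset.sum_mul]
    _ = ∑ i ∈ r.index, ∑ l ∈ (b i).index,
          ((HopfAlgebra.antipode (R := K) ((b i).left l) ⊗ₜ[K]
            HopfAlgebra.antipode (R := K) (r.left i)) *
            Coalgebra.comul (R := K) ((b i).right l)) := key1
    _ = ∑ i ∈ r.index, ∑ l ∈ (b i).index, ∑ m ∈ (e i l).index,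
          ((HopfAlgebra.antipode (R := K) ((b i).left l) * (e i l).left m) ⊗ₜ[K]
            (HopfAlgebra.antipode (R := K) (r.left i) * (e i l).right m)) := by
        refine Finset.sum_congr rfl fun i _ => Finset.sum_congr rfl fun l _ => ?_
        rw [← (e i l).eq, Finset.mul_sum]
        exact Finset.sum_congr rfl fun m _ => Algebra.TensorProduct.tmul_mul_tmul _ _ _ _
    _ = ∑ i ∈ r.index, ∑ l ∈ (b i).index, ∑ m ∈ (d i l).index,
          ((HopfAlgebra.antipode (R := K) ((d i l).left m) * (d i l).right m) ⊗ₜ[K]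
            (HopfAlgebra.antipode (R := K) (r.left i) * (b i).right l)) := by
        refine Finset.sum_congr rfl fun i _ => ?_
        -- second 3-fold coassociativity move, for fixed i
        have key2 := Coalgebra.sum_tmul_tmul_eq (R := K) (b i) (d i) (e i)
        set ΘD : B ⊗[K] (B ⊗[K] B) →ₗ[K] B ⊗[K] B :=
          TensorProduct.map
            (LinearMap.mul' K B ∘ₗ
              TensorProduct.map (HopfAlgebra.antipode (R := K)) LinearMap.id)
            (LinearMap.mulLeft K (HopfAlgebra.antipode (R := K) (r.left i))) ∘ₗ
          (TensorProduct.assoc K B B B).symm.toLinearMap with hΘD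
        apply_fun ΘD at key2
        simp only [hΘD, map_sum, LinearMap.comp_apply, LinearEquiv.coe_coe,
          TensorProduct.assoc_symm_tmul, TensorProduct.map_tmul, LinearMap.mul'_apply,
          LinearMap.mulLeft_apply, LinearMap.id_coe, id_eq] at key2
        exact key2.symm
    _ = ∑ i ∈ r.index, ∑ l ∈ (b i).index,
          Coalgebra.counit (R := K) ((b i).left l) •
            ((1 : B) ⊗ₜ[K] (HopfAlgebra.antipode (R := K) (r.left i) * (b i).right l)) := by
        refine Finset.sum_congr rfl fun i _ => Finset.sum_congr rfl fun l _ => ?_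
        rw [← TensorProduct.sum_tmul, HopfAlgebra.sum_antipode_mul_eq_smul (d i l),
          TensorProduct.smul_tmul']
    _ = ∑ i ∈ r.index,
          (1 : B) ⊗ₜ[K] (HopfAlgebra.antipode (R := K) (r.left i) * r.right i) := by
        refine Finset.sum_congr rfl fun i _ => ?_
        conv_rhs => rw [← sum_counit_smul _ (b i)]
        rw [Finset.mul_sum, TensorProduct.tmul_sum]
        exact Finset.sum_congr rfl fun l _ => by rw [mul_smul_comm, TensorProduct.tmul_smul]
    _ = algebraMap K (B ⊗[K] B) (Coalgebra.counit (R := K) x) := by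
        rw [← TensorProduct.tmul_sum, HopfAlgebra.sum_antipode_mul_eq_smul r,
          TensorProduct.tmul_smul, Algebra.algebraMap_eq_smul_one,
          Algebra.TensorProduct.one_def]

lemma comul_antipode_comp :
    (Coalgebra.comul (R := K) ∘ₗ HopfAlgebra.antipode (R := K) : B →ₗ[K] B ⊗[K] B) =
      gSwap := by
  calc (Coalgebra.comul (R := K) ∘ₗ HopfAlgebra.antipode (R := K) : B →ₗ[K] B ⊗[K] B)
      = hconv hunit (Coalgebra.comul (R := K) ∘ₗ HopfAlgebra.antipode (R := K)) := by
        rw [hunit_hconv]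
    _ = hconv (hconv gSwap (Coalgebra.comul (R := K)))
          (Coalgebra.comul (R := K) ∘ₗ HopfAlgebra.antipode (R := K)) := by
        rw [hconv_gSwap_comul]
    _ = hconv gSwap (hconv (Coalgebra.comul (R := K))
          (Coalgebra.comul (R := K) ∘ₗ HopfAlgebra.antipode (R := K))) := hconv_assoc _ _ _
    _ = hconv gSwap hunit := by rw [hconv_comul_comulS]
    _ = gSwap := hconv_hunit _

lemma comul_antipode (x : B) :
    Coalgebra.comul (R := K) (HopfAlgebra.antipode (R := K) x) =
      TensorProduct.map (HopfAlgebra.antipode (R := K)) (HopfAlgebra.antipode (R := K))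
        ((TensorProduct.comm K B B) (Coalgebra.comul (R := K) x)) :=
  DFunLike.congr_fun (comul_antipode_comp (K := K) (B := B)) x

end Part2

section Part3

open Coalgebra HopfAlgebra TensorProduct

variable {K : Type*} [Field K] {B : Type*} [Ring B] [HopfAlgebra K B]
variable {C : Type*} [Ring C] [Algebra K C]

/-- `f(x) = g(x₁) ⊗ x₂`. -/
noncomputable def fmH (g : B →ₗ[K] C) : B →ₗ[K] C ⊗[K] B :=
  TensorProduct.map g LinearMap.id ∘ₗ Coalgebra.comul (R := K)

/-- The coaction `id ⊗ Δ` (reassociated) on `C ⊗ B`, as an algebra map. -/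
noncomputable def psiA (K : Type*) [Field K] (C B : Type*) [Ring C] [Algebra K C] [Ring B]
    [HopfAlgebra K B] : (C ⊗[K] B) →ₐ[K] (C ⊗[K] B) ⊗[K] B :=
  ((Algebra.TensorProduct.assoc K K K C B B).symm.toAlgHom).comp
    (Algebra.TensorProduct.map (AlgHom.id K C) (Bialgebra.comulAlgHom K B))

lemma psiA_tmul_repr (c : C) (h : B) (r : Coalgebra.Repr K h (B × B)) :
    psiA K C B (c ⊗ₜ[K] h) = ∑ i ∈ r.index, (c ⊗ₜ[K] r.left i) ⊗ₜ[K] r.right i := by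
  simp only [psiA, AlgHom.comp_apply, Algebra.TensorProduct.map_tmul, AlgHom.coe_id, id_eq,
    Bialgebra.comulAlgHom_apply]
  rw [← r.eq, TensorProduct.tmul_sum, map_sum]
  exact Finset.sum_congr rfl fun i _ => rfl

lemma fmH_repr (g : B →ₗ[K] C) (x : B) (r : Coalgebra.Repr K x (B × B)) :
    fmH g x = ∑ i ∈ r.index, g (r.left i) ⊗ₜ[K] r.right i := by
  simp only [fmH, LinearMap.comp_apply, ← r.eq, map_sum, TensorProduct.map_tmul,
    LinearMap.id_coe, id_eq]

lemma psiA_fmH (g : B →ₗ[K] C) (x : B) :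
    psiA K C B (fmH g x) =
      TensorProduct.map (fmH g) LinearMap.id (Coalgebra.comul (R := K) x) := by
  have r : Coalgebra.Repr K x (B × B) := ℛ K x
  have a : ∀ i, Coalgebra.Repr K (r.left i) (B × B) := fun i => ℛ K (r.left i)
  have b : ∀ i, Coalgebra.Repr K (r.right i) (B × B) := fun i => ℛ K (r.right i)
  have key := Coalgebra.sum_tmul_tmul_eq (R := K) r a b
  apply_fun ((TensorProduct.assoc K C B B).symm.toLinearMap ∘ₗ
    TensorProduct.map g (LinearMap.id : B ⊗[K] B →ₗ[K] B ⊗[K] B)) at key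
  simp only [map_sum, LinearMap.comp_apply, TensorProduct.map_tmul, LinearMap.id_coe, id_eq,
    LinearEquiv.coe_coe, TensorProduct.assoc_symm_tmul] at key
  -- key : ∑ i ∑ j (g a₁ ⊗ a₂) ⊗ rᵢ = ∑ i ∑ l (g lᵢ ⊗ b₁) ⊗ b₂
  calc psiA K C B (fmH g x)
      = ∑ i ∈ r.index, psiA K C B (g (r.left i) ⊗ₜ[K] r.right i) := by
        rw [fmH_repr g x r, map_sum]
    _ = ∑ i ∈ r.index, ∑ l ∈ (b i).index,
          (g (r.left i) ⊗ₜ[K] (b i).left l) ⊗ₜ[K] (b i).right l := by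
        exact Finset.sum_congr rfl fun i _ => psiA_tmul_repr _ _ (b i)
    _ = ∑ i ∈ r.index, ∑ j ∈ (a i).index,
          (g ((a i).left j) ⊗ₜ[K] (a i).right j) ⊗ₜ[K] r.right i := key.symm
    _ = ∑ i ∈ r.index, (fmH g (r.left i)) ⊗ₜ[K] r.right i := by
        refine Finset.sum_congr rfl fun i _ => ?_
        rw [fmH_repr g _ (a i), TensorProduct.sum_tmul]
    _ = TensorProduct.map (fmH g) LinearMap.id (Coalgebra.comul (R := K) x) := by
        rw [← r.eq, map_sum]
        exact Finset.sum_congr rfl fun i _ => rfl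

/-- `Λ(b ⊗ h) = b * f(S h)`. -/
noncomputable def lamH (g : B →ₗ[K] C) : (C ⊗[K] B) ⊗[K] B →ₗ[K] C ⊗[K] B :=
  LinearMap.mul' K (C ⊗[K] B) ∘ₗ
    TensorProduct.map LinearMap.id (fmH g ∘ₗ HopfAlgebra.antipode (R := K))

/-- `ρ(c ⊗ h) = c * g(S h)`. -/
noncomputable def rhoH (g : B →ₗ[K] C) : C ⊗[K] B →ₗ[K] C :=
  LinearMap.mul' K C ∘ₗ TensorProduct.map LinearMap.id (g ∘ₗ HopfAlgebra.antipode (R := K))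

/-- The master lemma. -/
lemma master (g : B →ₗ[K] C) (w : C ⊗[K] B) :
    lamH g (psiA K C B w) = rhoH g w ⊗ₜ[K] (1 : B) := by
  induction w using TensorProduct.induction_on with
  | zero => simp
  | add w₁ w₂ h₁ h₂ => rw [map_add, map_add, h₁, h₂, map_add, TensorProduct.add_tmul]
  | tmul c h =>
    have r : Coalgebra.Repr K h (B × B) := ℛ K h
    have a : ∀ i, Coalgebra.Repr K (r.left i) (B × B) := fun i => ℛ K (r.left i)
    have b : ∀ i, Coalgebra.Repr K (r.right i) (B × B) := fun i => ℛ K (r.right i)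
    have key := Coalgebra.sum_tmul_tmul_eq (R := K) r a b
    set Θ : B ⊗[K] (B ⊗[K] B) →ₗ[K] C ⊗[K] B :=
      (TensorProduct.comm K B C).toLinearMap ∘ₗ
        TensorProduct.map
          (LinearMap.mul' K B ∘ₗ
            TensorProduct.map LinearMap.id (HopfAlgebra.antipode (R := K)))
          (LinearMap.mulLeft K c ∘ₗ g ∘ₗ HopfAlgebra.antipode (R := K)) ∘ₗ
        (TensorProduct.assoc K B B B).symm.toLinearMap with hΘ
    apply_fun Θ at key
    simp only [hΘ, map_sum, LinearMap.comp_apply, LinearEquiv.coe_coe,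
      TensorProduct.assoc_symm_tmul, TensorProduct.map_tmul, LinearMap.mul'_apply,
      LinearMap.mulLeft_apply, LinearMap.id_coe, id_eq, TensorProduct.comm_tmul] at key
    -- key : ∑ i ∑ j (c * g (S rᵢ)) ⊗ (a₁ * S a₂) = ∑ i ∑ l (c * g (S b₂)) ⊗ (lᵢ * S b₁)
    calc lamH g (psiA K C B (c ⊗ₜ[K] h))
        = ∑ i ∈ r.index,
            (c ⊗ₜ[K] r.left i) * fmH g (HopfAlgebra.antipode (R := K) (r.right i)) := by
          rw [psiA_tmul_repr c h r, map_sum]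
          refine Finset.sum_congr rfl fun i _ => ?_
          simp only [lamH, LinearMap.comp_apply, TensorProduct.map_tmul, LinearMap.id_coe,
            id_eq, LinearMap.mul'_apply]
      _ = ∑ i ∈ r.index, ∑ l ∈ (b i).index,
            (c * g (HopfAlgebra.antipode (R := K) ((b i).right l))) ⊗ₜ[K]
              (r.left i * HopfAlgebra.antipode (R := K) ((b i).left l)) := by
          refine Finset.sum_congr rfl fun i _ => ?_
          have hfS : fmH g (HopfAlgebra.antipode (R := K) (r.right i)) =
              ∑ l ∈ (b i).index,
                g (HopfAlgebra.antipode (R := K) ((b i).right l)) ⊗ₜ[K]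
                  HopfAlgebra.antipode (R := K) ((b i).left l) := by
            rw [fmH, LinearMap.comp_apply, comul_antipode, ← (b i).eq]
            simp only [map_sum, TensorProduct.comm_tmul, TensorProduct.map_tmul,
              LinearMap.id_coe, id_eq]
          rw [hfS, Finset.mul_sum]
          exact Finset.sum_congr rfl fun l _ => by
            rw [Algebra.TensorProduct.tmul_mul_tmul]
      _ = ∑ i ∈ r.index, ∑ j ∈ (a i).index,
            (c * g (HopfAlgebra.antipode (R := K) (r.right i))) ⊗ₜ[K]
              ((a i).left j * HopfAlgebra.antipode (R := K) ((a i).right j)) := key.symm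
      _ = ∑ i ∈ r.index, Coalgebra.counit (R := K) (r.left i) •
            ((c * g (HopfAlgebra.antipode (R := K) (r.right i))) ⊗ₜ[K] (1 : B)) := by
          refine Finset.sum_congr rfl fun i _ => ?_
          rw [← TensorProduct.tmul_sum, HopfAlgebra.sum_mul_antipode_eq_smul (a i),
            TensorProduct.tmul_smul]
      _ = (c * g (HopfAlgebra.antipode (R := K)
            (∑ i ∈ r.index, Coalgebra.counit (R := K) (r.left i) • r.right i))) ⊗ₜ[K] (1 : B) := by
          rw [map_sum, map_sum, Finset.mul_sum, TensorProduct.sum_tmul]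
          refine Finset.sum_congr rfl fun i _ => ?_
          rw [map_smul, map_smul, mul_smul_comm, TensorProduct.smul_tmul']
      _ = rhoH g (c ⊗ₜ[K] h) ⊗ₜ[K] (1 : B) := by
          rw [sum_counit_smul _ r]
          simp only [rhoH, LinearMap.comp_apply, TensorProduct.map_tmul, LinearMap.id_coe, id_eq,
            LinearMap.mul'_apply]

end Part3

section Part4

open Coalgebra HopfAlgebra TensorProduct

variable {K : Type*} [Field K] {B : Type*} [Ring B] [HopfAlgebra K B]
variable {C : Type*} [Ring C] [Algebra K C]

lemma genP (g : B →ₗ[K] C) (δ : TensorAlgebra K B →ₐ[K] C ⊗[K] B)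
    (hδ : ∀ y : B, δ (TensorAlgebra.ι K y) = fmH g y) (x : B) :
    δ (PElem K x) =
      (LinearMap.mul' K C
        ((TensorProduct.map g (g.comp (HopfAlgebra.antipode (R := K))))
          (Coalgebra.comul (R := K) x))) ⊗ₜ[K] (1 : B) := by
  have r : Coalgebra.Repr K x (B × B) := ℛ K x
  have hP : PElem K x = ∑ i ∈ r.index,
      TensorAlgebra.ι K (r.left i) *
        TensorAlgebra.ι K (HopfAlgebra.antipode (R := K) (r.right i)) := by
    rw [PElem, ← r.eq]
    simp only [map_sum, TensorProduct.map_tmul, LinearMap.mul'_apply, LinearMap.comp_apply]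
  have h1 : δ (PElem K x) =
      lamH g (TensorProduct.map (fmH g) LinearMap.id (Coalgebra.comul (R := K) x)) := by
    calc δ (PElem K x)
        = ∑ i ∈ r.index, fmH g (r.left i) *
            fmH g (HopfAlgebra.antipode (R := K) (r.right i)) := by
          rw [hP, map_sum]
          exact Finset.sum_congr rfl fun i _ => by rw [map_mul, hδ, hδ]
      _ = lamH g (TensorProduct.map (fmH g) LinearMap.id (Coalgebra.comul (R := K) x)) := by
          rw [← r.eq]
          simp only [map_sum, TensorProduct.map_tmul, LinearMap.id_coe, id_eq, lamH,
            LinearMap.comp_apply, LinearMap.mul'_apply]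
  rw [h1, ← psiA_fmH, master]
  congr 1
  rw [fmH_repr g x r]
  conv_rhs => rw [← r.eq]
  simp only [map_sum, rhoH, LinearMap.comp_apply, TensorProduct.map_tmul, LinearMap.id_coe,
    id_eq, LinearMap.mul'_apply]

lemma genQ (g : B →ₗ[K] C) (δ : TensorAlgebra K B →ₐ[K] C ⊗[K] B)
    (hδ : ∀ y : B, δ (TensorAlgebra.ι K y) = fmH g y) (x y : B) :
    δ (QElem K x y) =
      (LinearMap.mul' K C
        ((TensorProduct.map (LinearMap.mul' K C) LinearMap.id)
          ((TensorProduct.map (TensorProduct.map g g)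
              (g.comp ((HopfAlgebra.antipode (R := K)).comp (LinearMap.mul' K B))))
            ((TensorProduct.tensorTensorTensorComm K B B B B)
              ((Coalgebra.comul (R := K) x) ⊗ₜ[K] (Coalgebra.comul (R := K) y)))))) ⊗ₜ[K]
        (1 : B) := by
  have r : Coalgebra.Repr K x (B × B) := ℛ K x
  have s : Coalgebra.Repr K y (B × B) := ℛ K y
  have hTT : (TensorProduct.tensorTensorTensorComm K B B B B)
      ((Coalgebra.comul (R := K) x) ⊗ₜ[K] (Coalgebra.comul (R := K) y)) =
      ∑ i ∈ r.index, ∑ j ∈ s.index,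
        (r.left i ⊗ₜ[K] s.left j) ⊗ₜ[K] (r.right i ⊗ₜ[K] s.right j) := by
    rw [← r.eq, ← s.eq]
    simp only [TensorProduct.sum_tmul, TensorProduct.tmul_sum, map_sum,
      TensorProduct.tensorTensorTensorComm_tmul]
    exact Finset.sum_comm
  have hQ : QElem K x y = ∑ i ∈ r.index, ∑ j ∈ s.index,
      (TensorAlgebra.ι K (r.left i) * TensorAlgebra.ι K (s.left j)) *
        TensorAlgebra.ι K (HopfAlgebra.antipode (R := K) (r.right i * s.right j)) := by
    rw [QElem, hTT]
    simp only [map_sum, TensorProduct.map_tmul, LinearMap.mul'_apply, LinearMap.comp_apply,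
      LinearMap.id_coe, id_eq]
  calc δ (QElem K x y)
      = ∑ i ∈ r.index, ∑ j ∈ s.index,
          (fmH g (r.left i) * fmH g (s.left j)) *
            fmH g (HopfAlgebra.antipode (R := K) (r.right i * s.right j)) := by
        rw [hQ, map_sum]
        exact Finset.sum_congr rfl fun i _ => by
          rw [map_sum]
          exact Finset.sum_congr rfl fun j _ => by rw [map_mul, map_mul, hδ, hδ, hδ]
    _ = lamH g (psiA K C B (fmH g x * fmH g y)) := by
        rw [map_mul, psiA_fmH, psiA_fmH, ← r.eq, ← s.eq]
        simp only [map_sum, TensorProduct.map_tmul, LinearMap.id_coe, id_eq]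
        rw [Finset.sum_mul_sum]
        simp only [map_sum, Algebra.TensorProduct.tmul_mul_tmul, lamH, LinearMap.comp_apply,
          TensorProduct.map_tmul, LinearMap.id_coe, id_eq, LinearMap.mul'_apply]
    _ = rhoH g (fmH g x * fmH g y) ⊗ₜ[K] (1 : B) := by rw [master]
    _ = _ := by
        congr 1
        rw [hTT, fmH_repr g x r, fmH_repr g y s, Finset.sum_mul_sum]
        simp only [map_sum, Algebra.TensorProduct.tmul_mul_tmul, rhoH, LinearMap.comp_apply,
          TensorProduct.map_tmul, LinearMap.id_coe, id_eq, LinearMap.mul'_apply]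

end Part4


end HopfAux

/-- The elements `P_x = X_{x₁} X_{S(x₂)}` and `Q_{x,y} = X_{x₁} X_{y₁} X_{S(x₂y₂)}`
of the tensor algebra `T(X_H)` are right `H`-coinvariant and satisfy `μ(P_x) = p_x ⊗ 1` and
`μ(Q_{x,y}) = q_{x,y} ⊗ 1`; consequently `p_x` and `q_{x,y}` belong to `μ̄(V_H)`
(the set `VHSet F = {a | ∃ u, μ(u) = a ⊗ 1}`). -/
theorem stmt_14 (k : Type*) [Field k] (H : Type*) [Ring H] [HopfAlgebra k H]
    (A : Type*) [CommRing A] [HopfAlgebra k A] (F : FreeCommHopfData k H A) :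
    (∀ x : H, coactT k H (PElem k x) = PElem k x ⊗ₜ[k] 1) ∧
    (∀ x y : H, coactT k H (QElem k x y) = QElem k x y ⊗ₜ[k] 1) ∧
    (∀ x : H, muMap F (PElem k x) = pMap F x ⊗ₜ[k] 1) ∧
    (∀ x y : H, muMap F (QElem k x y) = qMap F (x ⊗ₜ[k] y) ⊗ₜ[k] 1) ∧
    (∀ x : H, pMap F x ∈ VHSet F) ∧
    (∀ x y : H, qMap F (x ⊗ₜ[k] y) ∈ VHSet F) := by
  refine ⟨?_, ?_, ?_, ?_, ?_, ?_⟩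
  · intro x
    exact genP (TensorAlgebra.ι k) (coactT k H)
      (fun y => by rw [coactT, TensorAlgebra.lift_ι_apply]; rfl) x
  · intro x y
    exact genQ (TensorAlgebra.ι k) (coactT k H)
      (fun y => by rw [coactT, TensorAlgebra.lift_ι_apply]; rfl) x y
  · intro x
    exact genP F.t (muMap F)
      (fun y => by rw [muMap, TensorAlgebra.lift_ι_apply]; rfl) x
  · intro x y
    exact genQ F.t (muMap F)
      (fun y => by rw [muMap, TensorAlgebra.lift_ι_apply]; rfl) x y
  · intro x
    exact ⟨PElem k x, genP F.t (muMap F)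
      (fun y => by rw [muMap, TensorAlgebra.lift_ι_apply]; rfl) x⟩
  · intro x y
    exact ⟨QElem k x y, genQ F.t (muMap F)
      (fun y => by rw [muMap, TensorAlgebra.lift_ι_apply]; rfl) x y⟩


end
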